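/- Let Z be the Randers norm with Zermelo data (⟨·,·⟩, W) on a finite-dimensional real inner product space V, where ‖W‖ < 1. Suppose v ∈ V with v ≠ 0 and w̃ ∈ V with w̃ ≠ 0 are such that g_v(v,u) = ⟨w̃, u⟩ for all u ∈ V. Then Z(v) = ‖w̃‖ + ⟨w̃, W⟩. -/

import Mathlib

open scoped RealInnerProductSpace
open Classical

/-- The Randers norm with Zermelo data `(⟪·,·⟫, W)` on a real inner product space:
`Z(0) = 0` and, for `v ≠ 0`,
`Z(v) = (√(⟪W,v⟫² + (1 − ‖W‖²)‖v‖²) − ⟪W,v⟫)/(1 − ‖W‖²)`. -/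
noncomputable def randers {V : Type*} [NormedAddCommGroup V] [InnerProductSpace ℝ V]
    (W : V) (v : V) : ℝ :=
  if v = 0 then 0
  else (Real.sqrt (⟪W, v⟫ ^ 2 + (1 - ‖W‖ ^ 2) * ‖v‖ ^ 2) - ⟪W, v⟫) / (1 - ‖W‖ ^ 2)

/-- The fundamental tensor of a (Minkowski) norm `F` at the point `v`, evaluated on the
pair of vectors `(u, w)`: one half of the second Fréchet derivative of `F²` at `v`. -/
noncomputable def fundamentalTensor {V : Type*} [NormedAddCommGroup V] [NormedSpace ℝ V]
    (F : V → ℝ) (v u w : V) : ℝ :=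
  (1 / 2) * iteratedFDeriv ℝ 2 (fun x => F x ^ 2) v ![u, w]

section Aux

variable {V : Type*} [NormedAddCommGroup V] [InnerProductSpace ℝ V]

/-- The square of the Randers norm, as a formula without the `if`. -/
noncomputable def rF (W : V) (x : V) : ℝ :=
  ((Real.sqrt (⟪W, x⟫ ^ 2 + (1 - ‖W‖ ^ 2) * ‖x‖ ^ 2) - ⟪W, x⟫) / (1 - ‖W‖ ^ 2)) ^ 2

lemma randers_sq_eq (W : V) (x : V) : randers W x ^ 2 = rF W x := by
  by_cases hx : x = 0
  · simp [randers, rF, hx]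
  · simp [randers, rF, hx]

lemma harg_pos (W : V) (hW : ‖W‖ < 1) {x : V} (hx : x ≠ 0) :
    0 < ⟪W, x⟫ ^ 2 + (1 - ‖W‖ ^ 2) * ‖x‖ ^ 2 := by
  have ha : 0 < 1 - ‖W‖ ^ 2 := by nlinarith [norm_nonneg W]
  have hx' : 0 < ‖x‖ ^ 2 := by
    have := norm_pos_iff.2 hx
    positivity
  have := mul_pos ha hx'
  nlinarith [sq_nonneg (⟪W, x⟫ : ℝ)]

lemma contDiffAt_rF (W : V) (hW : ‖W‖ < 1) {x : V} (hx : x ≠ 0) :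
    ContDiffAt ℝ 2 (rF W) x := by
  have hpos := harg_pos W hW hx
  have h1 : ContDiffAt ℝ 2 (fun y : V => ⟪W, y⟫ ^ 2 + (1 - ‖W‖ ^ 2) * ‖y‖ ^ 2) x :=
    ((((innerSL ℝ W).contDiff.pow 2).add
      (contDiff_const.mul (contDiff_norm_sq ℝ))).contDiffAt)
  have h2 : ContDiffAt ℝ 2
      (fun y : V => Real.sqrt (⟪W, y⟫ ^ 2 + (1 - ‖W‖ ^ 2) * ‖y‖ ^ 2)) x :=
    h1.sqrt hpos.ne'
  exact ((h2.sub (innerSL ℝ W).contDiff.contDiffAt).div_const _).pow 2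

lemma hasFDerivAt_rF (W : V) (hW : ‖W‖ < 1) {x : V} (hx : x ≠ 0) :
    HasFDerivAt (rF W)
      (innerSL ℝ ((2 * randers W x / Real.sqrt (⟪W, x⟫ ^ 2 + (1 - ‖W‖ ^ 2) * ‖x‖ ^ 2)) •
        (x - randers W x • W))) x := by
  have ha : 0 < 1 - ‖W‖ ^ 2 := by nlinarith [norm_nonneg W]
  have hpos := harg_pos W hW hx
  set a := 1 - ‖W‖ ^ 2 with ha_def
  set p := (⟪W, x⟫ : ℝ) with hp_def
  set Q := Real.sqrt (p ^ 2 + a * ‖x‖ ^ 2) with hQ_def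
  have hQpos : 0 < Q := Real.sqrt_pos.2 hpos
  have hZ : randers W x = (Q - p) / a := by rw [randers, if_neg hx]
  have hp : HasFDerivAt (fun y : V => (⟪W, y⟫ : ℝ)) (innerSL ℝ W) x :=
    (innerSL ℝ W).hasFDerivAt
  have hr : HasFDerivAt (fun y : V => ‖y‖ ^ 2) ((2 : ℝ) • innerSL ℝ x) x := by
    have := (hasStrictFDerivAt_norm_sq x).hasFDerivAt
    convert this using 1
    ext u
    simp [two_smul]
  have hp2 : HasFDerivAt (fun y : V => (⟪W, y⟫ : ℝ) ^ 2)
      (((2 : ℝ) * p ^ 1) • innerSL ℝ W) x := by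
    have := (hasDerivAt_pow 2 p).comp_hasFDerivAt x hp
    exact this.congr_fderiv (by norm_num)
  have hh : HasFDerivAt (fun y : V => (⟪W, y⟫ : ℝ) ^ 2 + a * ‖y‖ ^ 2)
      ((((2 : ℝ) * p ^ 1) • innerSL ℝ W) + a • ((2 : ℝ) • innerSL ℝ x)) x :=
    hp2.add (hr.const_mul a)
  have hQ' : HasFDerivAt (fun y : V => Real.sqrt ((⟪W, y⟫ : ℝ) ^ 2 + a * ‖y‖ ^ 2))
      ((1 / (2 * Q)) • ((((2 : ℝ) * p ^ 1) • innerSL ℝ W) + a • ((2 : ℝ) • innerSL ℝ x))) x :=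
    hh.sqrt hpos.ne'
  have hg : HasFDerivAt
      (fun y : V => (Real.sqrt ((⟪W, y⟫ : ℝ) ^ 2 + a * ‖y‖ ^ 2) - ⟪W, y⟫) / a)
      ((1 / a) • ((1 / (2 * Q)) •
        ((((2 : ℝ) * p ^ 1) • innerSL ℝ W) + a • ((2 : ℝ) • innerSL ℝ x)) - innerSL ℝ W)) x := by
    have h0 := (hQ'.sub hp).mul_const (1 / a)
    have hfe : (fun y : V => (Real.sqrt ((⟪W, y⟫ : ℝ) ^ 2 + a * ‖y‖ ^ 2) - ⟪W, y⟫) / a)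
        = fun y : V => (Real.sqrt ((⟪W, y⟫ : ℝ) ^ 2 + a * ‖y‖ ^ 2) - ⟪W, y⟫) * (1 / a) := by
      funext y; rw [mul_one_div]
    rw [hfe]
    exact h0
  have hbig : HasFDerivAt (rF W)
      (((2 : ℝ) * ((Q - p) / a) ^ 1) • ((1 / a) • ((1 / (2 * Q)) •
        ((((2 : ℝ) * p ^ 1) • innerSL ℝ W) + a • ((2 : ℝ) • innerSL ℝ x)) - innerSL ℝ W))) x := by
    have := (hasDerivAt_pow 2 ((Q - p) / a)).comp_hasFDerivAt x hg
    exact this.congr_fderiv (by norm_num)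
  convert hbig using 1
  ext u
  rw [hZ]
  simp only [ContinuousLinearMap.smul_apply, ContinuousLinearMap.add_apply,
    ContinuousLinearMap.sub_apply, innerSL_apply_apply, smul_eq_mul, inner_sub_left,
    real_inner_smul_left, pow_one]
  field_simp
  ring
end Aux

/-- If `v ≠ 0` is the `Z`-gradient of the covector `⟪w̃, ·⟫` with `w̃ ≠ 0` (that is,
`g_v(v,u) = ⟪w̃,u⟫` for all `u`), then `Z(v) = ‖w̃‖ + ⟪w̃, W⟫`. -/
theorem randers_norm_of_gradient {V : Type*} [NormedAddCommGroup V]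
    [InnerProductSpace ℝ V] [FiniteDimensional ℝ V] (W : V) (hW : ‖W‖ < 1)
    (v : V) (hv : v ≠ 0) (wt : V) (hwt : wt ≠ 0)
    (hgrad : ∀ u : V, fundamentalTensor (randers W) v v u = ⟪wt, u⟫) :
    randers W v = ‖wt‖ + ⟪wt, W⟫ := by
  have ha : 0 < 1 - ‖W‖ ^ 2 := by nlinarith [norm_nonneg W]
  set a := 1 - ‖W‖ ^ 2 with ha_def
  set p := (⟪W, v⟫ : ℝ) with hp_def
  set Q := Real.sqrt (p ^ 2 + a * ‖v‖ ^ 2) with hQ_def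
  have hpos : 0 < p ^ 2 + a * ‖v‖ ^ 2 := harg_pos W hW hv
  have hQpos : 0 < Q := Real.sqrt_pos.2 hpos
  set Z := randers W v with hZ_def
  have hZ : Z = (Q - p) / a := by rw [hZ_def, randers, if_neg hv]
  have hpQ : p < Q := by
    have h1 : p ≤ |p| := le_abs_self p
    have h2 : |p| = Real.sqrt (p ^ 2) := (Real.sqrt_sq_eq_abs p).symm
    have hv2 : 0 < ‖v‖ ^ 2 := by
      have := norm_pos_iff.2 hv
      positivity
    have h3 : Real.sqrt (p ^ 2) < Q := by
      apply Real.sqrt_lt_sqrt (sq_nonneg p)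
      nlinarith [mul_pos ha hv2]
    linarith
  have hZpos : 0 < Z := by
    rw [hZ]; exact div_pos (by linarith) ha
  -- the first derivative of rF at v
  have hD : fderiv ℝ (rF W) v = innerSL ℝ ((2 * Z / Q) • (v - Z • W)) :=
    (hasFDerivAt_rF W hW hv).fderiv
  -- homogeneity of the derivative
  have hscale : ∀ t : ℝ, 0 < t →
      fderiv ℝ (rF W) (t • v) = t • fderiv ℝ (rF W) v := by
    intro t ht
    have htv : t • v ≠ 0 := smul_ne_zero ht.ne' hv
    have douter : HasFDerivAt (rF W) (fderiv ℝ (rF W) (t • v)) (t • v) :=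
      (hasFDerivAt_rF W hW htv).differentiableAt.hasFDerivAt
    have dinner : HasFDerivAt (fun y : V => t • y)
        (t • ContinuousLinearMap.id ℝ V) v := (hasFDerivAt_id v).const_smul t
    have d1 : HasFDerivAt (fun y : V => rF W (t • y))
        ((fderiv ℝ (rF W) (t • v)).comp (t • ContinuousLinearMap.id ℝ V)) v :=
      douter.comp v dinner
    have e1 : (fun y : V => rF W (t • y)) = fun y : V => t ^ 2 * rF W y := by
      funext y
      have h1 : (⟪W, t • y⟫ : ℝ) = t * ⟪W, y⟫ := real_inner_smul_right W y t
      have h2 : ‖t • y‖ ^ 2 = t ^ 2 * ‖y‖ ^ 2 := by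
        rw [norm_smul, mul_pow, Real.norm_eq_abs, sq_abs]
      rw [rF, rF, h1, h2]
      have h3 : (t * ⟪W, y⟫) ^ 2 + (1 - ‖W‖ ^ 2) * (t ^ 2 * ‖y‖ ^ 2)
          = t ^ 2 * ((⟪W, y⟫ : ℝ) ^ 2 + (1 - ‖W‖ ^ 2) * ‖y‖ ^ 2) := by ring
      rw [h3, Real.sqrt_mul (sq_nonneg t), Real.sqrt_sq ht.le]
      ring
    have d2 : HasFDerivAt (fun y : V => t ^ 2 * rF W y)
        ((t ^ 2 : ℝ) • fderiv ℝ (rF W) v) v :=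
      ((hasFDerivAt_rF W hW hv).differentiableAt.hasFDerivAt).const_mul (t ^ 2)
    have d1' : HasFDerivAt (fun y : V => t ^ 2 * rF W y)
        ((fderiv ℝ (rF W) (t • v)).comp (t • ContinuousLinearMap.id ℝ V)) v := e1 ▸ d1
    have huniq := d1'.unique d2
    ext u
    have h1 := congrFun (congrArg DFunLike.coe huniq) u
    simp only [ContinuousLinearMap.comp_apply, ContinuousLinearMap.smul_apply,
      ContinuousLinearMap.id_apply, map_smul, smul_eq_mul] at h1 ⊢
    rw [pow_two, mul_assoc] at h1
    exact mul_left_cancel₀ ht.ne' h1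
  -- Euler: second derivative contracted with v gives the first derivative
  have hC2 : ContDiffAt ℝ 2 (rF W) v := contDiffAt_rF W hW hv
  have hfd2 : DifferentiableAt ℝ (fderiv ℝ (rF W)) v :=
    (hC2.fderiv_right (m := 1) (by norm_num)).differentiableAt one_ne_zero
  have hsv : HasDerivAt (fun t : ℝ => t • v) v 1 := by
    simpa using (hasDerivAt_id (1 : ℝ)).smul_const v
  have hψ1 : HasDerivAt (fun t : ℝ => fderiv ℝ (rF W) (t • v))
      (fderiv ℝ (fderiv ℝ (rF W)) v v) 1 := by
    have hfd2' : HasFDerivAt (fderiv ℝ (rF W)) (fderiv ℝ (fderiv ℝ (rF W)) v)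
        ((1 : ℝ) • v) := by
      rw [one_smul]; exact hfd2.hasFDerivAt
    exact hfd2'.comp_hasDerivAt 1 hsv
  have hψ2 : HasDerivAt (fun t : ℝ => fderiv ℝ (rF W) (t • v))
      (fderiv ℝ (rF W) v) 1 := by
    have heq : (fun t : ℝ => fderiv ℝ (rF W) (t • v)) =ᶠ[nhds 1]
        (fun t : ℝ => t • fderiv ℝ (rF W) v) := by
      filter_upwards [Ioi_mem_nhds (show (0 : ℝ) < 1 by norm_num)] with t ht
      exact hscale t ht
    have base : HasDerivAt (fun t : ℝ => t • fderiv ℝ (rF W) v)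
        (fderiv ℝ (rF W) v) 1 := by
      simpa using (hasDerivAt_id (1 : ℝ)).smul_const (fderiv ℝ (rF W) v)
    exact base.congr_of_eventuallyEq heq
  have hEuler : fderiv ℝ (fderiv ℝ (rF W)) v v = fderiv ℝ (rF W) v := hψ1.unique hψ2
  -- identify wt
  have hwt_eq : wt = (Z / Q) • (v - Z • W) := by
    have h0 : ∀ u : V, (⟪(Z / Q) • (v - Z • W) - wt, u⟫ : ℝ) = 0 := by
      intro u
      have h1 := hgrad u
      simp only [fundamentalTensor] at h1
      have h2 : (fun x : V => randers W x ^ 2) = rF W := funext fun x => randers_sq_eq W x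
      rw [h2, iteratedFDeriv_two_apply] at h1
      simp only [Matrix.cons_val_zero, Matrix.cons_val_one, Matrix.head_cons] at h1
      rw [hEuler, hD] at h1
      simp only [innerSL_apply_apply] at h1
      rw [inner_sub_left]
      rw [← h1]
      rw [real_inner_smul_left, real_inner_smul_left]
      field_simp
      ring
    have h1 := h0 ((Z / Q) • (v - Z • W) - wt)
    rw [inner_self_eq_zero] at h1
    rw [sub_eq_zero] at h1
    exact h1.symm
  -- final algebra
  have haZ : a * Z + p = Q := by rw [hZ]; field_simp; ring
  have hQsq : Q ^ 2 = p ^ 2 + a * ‖v‖ ^ 2 := Real.sq_sqrt hpos.le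
  have key : a * Z ^ 2 + 2 * Z * p = ‖v‖ ^ 2 := by
    have e1 : (a * Z + p) ^ 2 = p ^ 2 + a * ‖v‖ ^ 2 := by rw [haZ]; exact hQsq
    have e2 : a * (a * Z ^ 2 + 2 * Z * p) = a * ‖v‖ ^ 2 := by linear_combination e1
    exact mul_left_cancel₀ ha.ne' e2
  have hnormsq : ‖v - Z • W‖ ^ 2 = Z ^ 2 := by
    have expand : ‖v - Z • W‖ ^ 2 = ‖v‖ ^ 2 - 2 * (Z * p) + Z ^ 2 * ‖W‖ ^ 2 := by
      rw [norm_sub_sq_real, real_inner_smul_right, norm_smul, Real.norm_eq_abs, mul_pow, sq_abs]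
      have hvW : (⟪v, W⟫ : ℝ) = p := by rw [hp_def]; exact real_inner_comm W v
      rw [hvW]
    rw [expand]
    have haw : ‖W‖ ^ 2 = 1 - a := by rw [ha_def]; ring
    rw [haw]
    linear_combination -key
  have hnorm : ‖v - Z • W‖ = Z := by
    rw [← Real.sqrt_sq (norm_nonneg (v - Z • W)), hnormsq, Real.sqrt_sq hZpos.le]
  rw [hwt_eq]
  rw [norm_smul, Real.norm_eq_abs, abs_of_pos (div_pos hZpos hQpos), hnorm]
  rw [real_inner_smul_left, inner_sub_left, real_inner_smul_left]
  have hvW : (⟪v, W⟫ : ℝ) = p := by rw [hp_def]; exact real_inner_comm W v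
  rw [hvW, real_inner_self_eq_norm_sq]
  have haw : ‖W‖ ^ 2 = 1 - a := by rw [ha_def]; ring
  rw [haw]
  field_simp
  rw [← haZ, ha_def]
  ring
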